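/- Let E(ρ) = Σ_{α=1}^{r} q_α V_α ρ V_α† be a mixed unitary channel on a d-dimensional system, where the V_α are unitary matrices pairwise orthogonal in the Hilbert–Schmidt inner product (trace(V_α† V_β) = d·δ_{αβ}) and q_α ≥ 0 sum to 1. If q_m = max_α q_α, then for every quantum channel E' one has F̄(E'∘E) ≤ (d·q_m + 1)/(d + 1), with equality for E'(ρ) = V_m† ρ V_m. -/

import Mathlib

open Matrix Kronecker

/-- The superoperator `Φ = Σ_α K_α ⊗ conj(K_α)` of a channel with Kraus
operators `K_α`. -/
noncomputable def superOp {d r : ℕ} (K : Fin r → Matrix (Fin d) (Fin d) ℂ) :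
    Matrix (Fin d × Fin d) (Fin d × Fin d) ℂ :=
  ∑ α, K α ⊗ₖ (K α).map (starRingEnd ℂ)

/-- The superoperator of the mixed unitary channel `ρ ↦ Σ_α q_α V_α ρ V_α†`. -/
noncomputable def mixedUnitarySuperOp {d r : ℕ} (q : Fin r → ℝ)
    (V : Fin r → Matrix (Fin d) (Fin d) ℂ) :
    Matrix (Fin d × Fin d) (Fin d × Fin d) ℂ :=
  ∑ α, (q α : ℂ) • (V α ⊗ₖ (V α).map (starRingEnd ℂ))

lemma trace_map_conj {n : ℕ} (A : Matrix (Fin n) (Fin n) ℂ) :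
    (A.map (starRingEnd ℂ)).trace = (starRingEnd ℂ) A.trace := by
  simp [Matrix.trace, Matrix.diag, map_sum]

lemma trace_conjTranspose_mul_self_re_nonneg {n : ℕ} (A : Matrix (Fin n) (Fin n) ℂ) :
    0 ≤ ((Aᴴ * A).trace).re := by
  have h : (Aᴴ * A).trace = ∑ i, ∑ j, (starRingEnd ℂ) (A j i) * A j i := by
    simp [Matrix.trace, Matrix.diag, Matrix.mul_apply, Matrix.conjTranspose_apply]
  rw [h, Complex.re_sum]
  refine Finset.sum_nonneg fun i _ => ?_
  rw [Complex.re_sum]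
  refine Finset.sum_nonneg fun j _ => ?_
  rw [mul_comm, Complex.mul_conj]
  simp [Complex.normSq_nonneg]

/-- Trace of product of superoperators. -/
lemma trace_superOp_mul {d r r' : ℕ} (q : Fin r → ℝ)
    (V : Fin r → Matrix (Fin d) (Fin d) ℂ)
    (K : Fin r' → Matrix (Fin d) (Fin d) ℂ) :
    (superOp K * mixedUnitarySuperOp q V).trace
      = ∑ β, ∑ α, ((q α : ℂ) * Complex.normSq ((K β * V α).trace)) := by
  unfold superOp mixedUnitarySuperOp
  rw [Finset.sum_mul_sum, Matrix.trace_sum]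
  refine Finset.sum_congr rfl fun β _ => ?_
  rw [Matrix.trace_sum]
  refine Finset.sum_congr rfl fun α _ => ?_
  rw [Matrix.mul_smul, Matrix.trace_smul, ← Matrix.mul_kronecker_mul,
    Matrix.trace_kronecker, ← Matrix.map_mul, trace_map_conj]
  rw [smul_eq_mul, Complex.mul_conj]

/-- Bessel's inequality for the orthogonal family `V α`. -/
lemma bessel {d r : ℕ} (hd : 0 < d)
    (V : Fin r → Matrix (Fin d) (Fin d) ℂ)
    (horth : ∀ α β, ((V α)ᴴ * V β).trace = if α = β then (d : ℂ) else 0)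
    (M : Matrix (Fin d) (Fin d) ℂ) :
    ∑ α, (Complex.normSq ((M * V α).trace) : ℝ) ≤ d * ((Mᴴ * M).trace).re := by
  set c : Fin r → ℂ := fun α => (M * V α).trace with hc
  set S : Matrix (Fin d) (Fin d) ℂ := ((d : ℂ))⁻¹ • ∑ α, c α • (V α)ᴴ with hS
  have hdC : (d : ℂ) ≠ 0 := Nat.cast_ne_zero.mpr hd.ne'
  have hMS : (Mᴴ * S).trace = ((d : ℂ))⁻¹ * ∑ α, c α * (starRingEnd ℂ) (c α) := by
    rw [hS, Matrix.mul_smul, Matrix.trace_smul, Matrix.mul_sum, Matrix.trace_sum]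
    congr 1
    refine Finset.sum_congr rfl fun α _ => ?_
    rw [Matrix.mul_smul, Matrix.trace_smul, smul_eq_mul]
    congr 1
    have : Mᴴ * (V α)ᴴ = (V α * M)ᴴ := (Matrix.conjTranspose_mul _ _).symm
    rw [this, Matrix.trace_conjTranspose, Matrix.trace_mul_comm]
    rfl
  have hSM : (Sᴴ * M).trace = ((d : ℂ))⁻¹ * ∑ α, c α * (starRingEnd ℂ) (c α) := by
    have : Sᴴ * M = (Mᴴ * S)ᴴ := by rw [Matrix.conjTranspose_mul, Matrix.conjTranspose_conjTranspose]
    rw [this, Matrix.trace_conjTranspose, hMS, star_mul']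
    congr 1
    · simp
    · rw [star_sum]
      exact Finset.sum_congr rfl fun α _ => by simp [star_mul', mul_comm]
  have hSS : (Sᴴ * S).trace = ((d : ℂ))⁻¹ * ∑ α, c α * (starRingEnd ℂ) (c α) := by
    rw [hS]
    rw [Matrix.conjTranspose_smul, Matrix.smul_mul, Matrix.mul_smul, Matrix.trace_smul,
      Matrix.trace_smul]
    rw [Matrix.conjTranspose_sum, Matrix.sum_mul]
    rw [Matrix.trace_sum]
    have hinner : ∀ α : Fin r, ((c α • (V α)ᴴ)ᴴ * ∑ β, c β • (V β)ᴴ).trace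
        = (starRingEnd ℂ) (c α) * c α * (d : ℂ) := by
      intro α
      rw [Matrix.mul_sum, Matrix.trace_sum]
      have hterm : ∀ β : Fin r, ((c α • (V α)ᴴ)ᴴ * (c β • (V β)ᴴ)).trace
          = (starRingEnd ℂ) (c α) * c β * (if β = α then (d : ℂ) else 0) := by
        intro β
        rw [Matrix.conjTranspose_smul, Matrix.smul_mul, Matrix.mul_smul, Matrix.trace_smul,
          Matrix.trace_smul, Matrix.conjTranspose_conjTranspose]
        rw [Matrix.trace_mul_comm, horth β α]
        simp [mul_assoc, mul_comm, mul_left_comm]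
      rw [Finset.sum_congr rfl fun β _ => hterm β]
      simp [Finset.sum_ite_eq, mul_comm]
    rw [Finset.sum_congr rfl fun α _ => hinner α]
    simp only [smul_eq_mul]
    rw [show (∑ α, (starRingEnd ℂ) (c α) * c α * (d : ℂ))
        = (∑ α, c α * (starRingEnd ℂ) (c α)) * (d : ℂ) from by
      rw [Finset.sum_mul]; exact Finset.sum_congr rfl fun α _ => by ring]
    field_simp
    simp [hdC]
  set T : ℂ := ((d : ℂ))⁻¹ * ∑ α, c α * (starRingEnd ℂ) (c α) with hT
  have hR : (((M - S)ᴴ * (M - S)).trace) = (Mᴴ * M).trace - T := by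
    rw [Matrix.conjTranspose_sub, Matrix.sub_mul, Matrix.mul_sub, Matrix.mul_sub,
      Matrix.trace_sub, Matrix.trace_sub, Matrix.trace_sub, hMS, hSM, hSS]
    ring
  have h0 : 0 ≤ (((M - S)ᴴ * (M - S)).trace).re := trace_conjTranspose_mul_self_re_nonneg _
  rw [hR] at h0
  have hTre : T.re = (d : ℝ)⁻¹ * ∑ α, (Complex.normSq (c α) : ℝ) := by
    have hsum : (∑ α, c α * (starRingEnd ℂ) (c α)) = ((∑ α, (Complex.normSq (c α) : ℝ) : ℝ) : ℂ) := by
      push_cast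
      exact Finset.sum_congr rfl fun α _ => by rw [Complex.mul_conj]
    rw [hT, hsum]
    have : ((d : ℂ))⁻¹ = ((((d : ℝ))⁻¹ : ℝ) : ℂ) := by push_cast; ring
    rw [this, ← Complex.ofReal_mul]
    simp
  have h1 : T.re ≤ ((Mᴴ * M).trace).re := by
    have := h0
    simp only [Complex.sub_re] at this
    linarith
  rw [hTre] at h1
  have hdpos : (0 : ℝ) < d := Nat.cast_pos.mpr hd
  calc ∑ α, (Complex.normSq (c α) : ℝ)
      = d * ((d : ℝ)⁻¹ * ∑ α, (Complex.normSq (c α) : ℝ)) := by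
        field_simp
    _ ≤ d * ((Mᴴ * M).trace).re := by
        exact mul_le_mul_of_nonneg_left h1 hdpos.le

theorem stmt_13 (d r : ℕ) (hd : 0 < d)
    (V : Fin r → Matrix (Fin d) (Fin d) ℂ)
    (hV : ∀ α, V α ∈ Matrix.unitaryGroup (Fin d) ℂ)
    (horth : ∀ α β, ((V α)ᴴ * V β).trace = if α = β then (d : ℂ) else 0)
    (q : Fin r → ℝ) (hq : ∀ α, 0 ≤ q α) (hsum : ∑ α, q α = 1)
    (m : Fin r) (hm : ∀ α, q α ≤ q m) :
    (∀ (r' : ℕ) (K' : Fin r' → Matrix (Fin d) (Fin d) ℂ),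
        ∑ β, (K' β)ᴴ * K' β = 1 →
          ((d : ℝ) + (superOp K' * mixedUnitarySuperOp q V).trace.re) /
              ((d : ℝ) * ((d : ℝ) + 1)) ≤
            ((d : ℝ) * q m + 1) / ((d : ℝ) + 1)) ∧
      ((d : ℝ) + (superOp (fun _ : Fin 1 => (V m)ᴴ) * mixedUnitarySuperOp q V).trace.re) /
          ((d : ℝ) * ((d : ℝ) + 1)) =
        ((d : ℝ) * q m + 1) / ((d : ℝ) + 1) := by
  have hdpos : (0 : ℝ) < d := Nat.cast_pos.mpr hd
  have hqm : 0 ≤ q m := hq m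
  constructor
  · intro r' K' hK
    rw [trace_superOp_mul]
    -- compute real part
    have hre : (∑ β, ∑ α, ((q α : ℂ) * Complex.normSq ((K' β * V α).trace))).re
        = ∑ β, ∑ α, (q α * Complex.normSq ((K' β * V α).trace) : ℝ) := by
      rw [Complex.re_sum]
      refine Finset.sum_congr rfl fun β _ => ?_
      rw [Complex.re_sum]
      refine Finset.sum_congr rfl fun α _ => ?_
      rw [← Complex.ofReal_mul]
      simp
    rw [hre]
    -- bound X ≤ d^2 * q m
    have hbound : (∑ β, ∑ α, (q α * Complex.normSq ((K' β * V α).trace) : ℝ))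
        ≤ (d : ℝ)^2 * q m := by
      have h1 : ∀ β : Fin r', ∑ α, (q α * Complex.normSq ((K' β * V α).trace) : ℝ)
          ≤ q m * (d * (((K' β)ᴴ * K' β).trace).re) := by
        intro β
        calc ∑ α, (q α * Complex.normSq ((K' β * V α).trace) : ℝ)
            ≤ ∑ α, (q m * Complex.normSq ((K' β * V α).trace) : ℝ) := by
              refine Finset.sum_le_sum fun α _ => ?_
              exact mul_le_mul_of_nonneg_right (hm α) (Complex.normSq_nonneg _)
          _ = q m * ∑ α, (Complex.normSq ((K' β * V α).trace) : ℝ) := by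
              rw [Finset.mul_sum]
          _ ≤ q m * (d * (((K' β)ᴴ * K' β).trace).re) := by
              exact mul_le_mul_of_nonneg_left (bessel hd V horth (K' β)) hqm
      calc (∑ β, ∑ α, (q α * Complex.normSq ((K' β * V α).trace) : ℝ))
          ≤ ∑ β, q m * (d * (((K' β)ᴴ * K' β).trace).re) := Finset.sum_le_sum fun β _ => h1 β
        _ = q m * (d * (∑ β, (((K' β)ᴴ * K' β).trace).re)) := by
            simp only [Finset.mul_sum]
        _ = (d : ℝ)^2 * q m := by
            have : (∑ β, (((K' β)ᴴ * K' β).trace).re) = (d : ℝ) := by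
              rw [← Complex.re_sum, ← Matrix.trace_sum, hK]
              simp
            rw [this]; ring
    rw [div_le_div_iff₀ (by positivity) (by positivity)]
    nlinarith [hbound]
  · rw [trace_superOp_mul]
    have hval : (∑ β : Fin 1, ∑ α, (((q α : ℂ)) * Complex.normSq (((fun _ : Fin 1 => (V m)ᴴ) β * V α).trace)))
        = ((q m * (d : ℝ)^2 : ℝ) : ℂ) := by
      rw [Finset.sum_const, Finset.card_univ]
      simp only [Fintype.card_fin, one_smul]
      have : ∀ α : Fin r, ((q α : ℂ) * Complex.normSq (((V m)ᴴ * V α).trace))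
          = if α = m then ((q m * (d : ℝ)^2 : ℝ) : ℂ) else 0 := by
        intro α
        rw [horth m α]
        by_cases h : α = m
        · subst h
          simp only [if_pos rfl]
          simp [Complex.normSq_natCast]
          exact Or.inl (by ring)
        · have h2 : ¬(m = α) := fun hh => h hh.symm
          rw [if_neg h2, if_neg h]
          simp
      rw [Finset.sum_congr rfl fun α _ => this α]
      simp
    rw [hval]
    rw [Complex.ofReal_re]
    field_simp
    ring
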